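/- arXiv:math/0611386 — 2 statements merged into one kernel-verified Lean document; each statement's English description precedes it below -/
import Mathlib

section
/- Let N = N(Q_n, m, r) be a quasi Q_n-filiform Lie algebra and δ a derivation of N. Then for every 1 ≤ s ≤ m, δ e_{sn} = λ_s e_{sn}, where λ_s = (n-2)·c^{s0}_{s0} + 2·c^{s1}_{s1}. -/
open Finset

lemma my_lie_sum {α} {L : Type*} [LieRing L] (x : L) (s : Finset α) (f : α → L) :
    ⁅x, ∑ i ∈ s, f i⁆ = ∑ i ∈ s, ⁅x, f i⁆ := by
  induction s using Finset.cons_induction with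
  | empty => simp
  | cons a s h ih => simp [Finset.sum_cons, ih]

lemma my_sum_lie {α} {L : Type*} [LieRing L] (x : L) (s : Finset α) (f : α → L) :
    ⁅∑ i ∈ s, f i, x⁆ = ∑ i ∈ s, ⁅f i, x⁆ := by
  induction s using Finset.cons_induction with
  | empty => simp
  | cons a s h ih => simp [Finset.sum_cons, ih]


/-- A quasi `Qₙ`-filiform Lie algebra `N = N(Qₙ, m, r)`: a finite-dimensional complex
nilpotent Lie algebra which is the sum of `m` pairwise commuting subalgebras, each
isomorphic to the filiform Lie algebra `Qₙ` with basis `e i 0, …, e i n` satisfying the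
`Qₙ` bracket relations, and such that
`{e 1 0, …, e 1 (n-1), …, e m 0, …, e m (n-1), e 1 n, …, e r n}` is a basis of `N`,
where `r = dim c^{n-1} N`. -/
structure QuasiQnFiliform (n m r : ℕ) (N : Type*) [LieRing N] [LieAlgebra ℂ N] : Type _ where
  /-- the distinguished vectors `e_{ij}`, for `1 ≤ i ≤ m`, `0 ≤ j ≤ n` -/
  e : ℕ → ℕ → N
  /-- `N` is nilpotent -/
  nilpotent : LieModule.IsNilpotent N N
  /-- `N` is finite-dimensional -/
  findim : FiniteDimensional ℂ N
  /-- `[e_{i0}, e_{ij}] = e_{i,j+1}` for `1 ≤ j ≤ n - 2` -/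
  bracket_e0 : ∀ i j, 1 ≤ i → i ≤ m → 1 ≤ j → j ≤ n - 2 → ⁅e i 0, e i j⁆ = e i (j + 1)
  /-- `[e_{i0}, e_{i,n-1}] = 0` -/
  bracket_e0_top : ∀ i, 1 ≤ i → i ≤ m → ⁅e i 0, e i (n - 1)⁆ = 0
  /-- `[e_{i0}, e_{in}] = 0` -/
  bracket_e0_n : ∀ i, 1 ≤ i → i ≤ m → ⁅e i 0, e i n⁆ = 0
  /-- `[e_{ij}, e_{i,n-j}] = (-1)^j e_{in}` for `1 ≤ j ≤ n - 1` -/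
  bracket_pair : ∀ i j, 1 ≤ i → i ≤ m → 1 ≤ j → j ≤ n - 1 →
    ⁅e i j, e i (n - j)⁆ = ((-1 : ℂ)) ^ j • e i n
  /-- all remaining brackets inside a component vanish -/
  bracket_zero : ∀ i j k, 1 ≤ i → i ≤ m → 1 ≤ j → j ≤ n → 1 ≤ k → k ≤ n → j + k ≠ n →
    ⁅e i j, e i k⁆ = 0
  /-- distinct components commute: `[N_i, N_{i'}] = 0` -/
  bracket_comm : ∀ i i' j j', 1 ≤ i → i ≤ m → 1 ≤ i' → i' ≤ m → i ≠ i' → j ≤ n → j' ≤ n →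
    ⁅e i j, e i' j'⁆ = 0
  /-- `{e_{i0}, …, e_{in}}` is linearly independent (each `Nᵢ ≅ Qₙ` has it as a basis) -/
  indep_comp : ∀ i, 1 ≤ i → i ≤ m → LinearIndependent ℂ (fun j : Fin (n + 1) => e i (j : ℕ))
  /-- the distinguished family is linearly independent … -/
  basis_indep : LinearIndependent ℂ
    (Sum.elim (fun p : Fin m × Fin n => e ((p.1 : ℕ) + 1) (p.2 : ℕ))
      (fun t : Fin r => e ((t : ℕ) + 1) n))
  /-- … and spans `N`, i.e. it is a basis of `N` (in particular `N = N₁ + ⋯ + N_m`) -/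
  basis_span : Submodule.span ℂ (Set.range
    (Sum.elim (fun p : Fin m × Fin n => e ((p.1 : ℕ) + 1) (p.2 : ℕ))
      (fun t : Fin r => e ((t : ℕ) + 1) n))) = ⊤
  /-- `r = dim c^{n-1} N` -/
  rank_lcs : Module.finrank ℂ (LieModule.lowerCentralSeries ℂ N N (n - 1)) = r

open Finset in
/-- Let `δ` be a derivation of a quasi `Qₙ`-filiform Lie algebra `N = N(Qₙ, m, r)`, with
`δ e_{st} = Σ_{i=1}^m Σ_{j=0}^{n-1} c^{st}_{ij} e_{ij} + Σ_{i=1}^r c^{st}_{in} e_{in}`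
for `t = 0, 1`.  Then for all `1 ≤ s ≤ m`, `δ e_{sn} = λ_s e_{sn}`, where
`λ_s = (n-2) c^{s0}_{s0} + 2 c^{s1}_{s1}`. -/
theorem derivation_apply_e_top
    (n d m r : ℕ) (hn : n = 2 * d + 1) (hd : 2 ≤ d)
    (hm : 1 ≤ m) (hr : 1 ≤ r) (hrm : r ≤ m)
    (N : Type*) [LieRing N] [LieAlgebra ℂ N] (Q : QuasiQnFiliform n m r N)
    (δ : LieDerivation ℂ N N) (c : ℕ → ℕ → ℕ → ℕ → ℂ)
    (hc : ∀ s t, 1 ≤ s → s ≤ m → t ≤ 1 →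
      δ (Q.e s t) = ∑ i ∈ Icc 1 m, ∑ j ∈ range n, c s t i j • Q.e i j
        + ∑ i ∈ Icc 1 r, c s t i n • Q.e i n) :
    ∀ s, 1 ≤ s → s ≤ m →
      δ (Q.e s n) = (((n - 2 : ℕ) : ℂ) * c s 0 s 0 + 2 * c s 1 s 1) • Q.e s n := by
  intro s hs1 hsm
  have hn5 : 5 ≤ n := by omega
  set T : ℕ → Submodule ℂ N := fun k => Submodule.span ℂ ((fun j => Q.e s j) '' Set.Icc k n)
    with hT_def
  have hmemT : ∀ k j, k ≤ j → j ≤ n → Q.e s j ∈ T k := fun k j h1 h2 =>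
    Submodule.subset_span ⟨j, ⟨h1, h2⟩, rfl⟩
  have hsIcc : s ∈ Icc 1 m := by rw [mem_Icc]; exact ⟨hs1, hsm⟩
  -- Lemma A : bracket of δ(e s 0) with e s k
  have hbrA : ∀ k, 1 ≤ k → k ≤ n - 2 →
      ⁅δ (Q.e s 0), Q.e s k⁆ =
        c s 0 s 0 • Q.e s (k + 1) + ((-1 : ℂ) ^ (n - k) * c s 0 s (n - k)) • Q.e s n := by
    intro k hk1 hk2
    rw [hc s 0 hs1 hsm (by norm_num), add_lie]
    simp only [my_sum_lie, smul_lie]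
    have h2 : ∑ i ∈ Icc 1 r, c s 0 i n • ⁅Q.e i n, Q.e s k⁆ = 0 := by
      refine Finset.sum_eq_zero fun i hi => ?_
      rw [mem_Icc] at hi
      rcases eq_or_ne i s with rfl | hne
      · rw [Q.bracket_zero i n k hi.1 (le_trans hi.2 hrm) (by omega) le_rfl (by omega)
          (by omega) (by omega), smul_zero]
      · rw [Q.bracket_comm i s n k hi.1 (le_trans hi.2 hrm) hs1 hsm hne le_rfl (by omega),
          smul_zero]
    rw [h2, add_zero]
    rw [Finset.sum_eq_single_of_mem s hsIcc (fun i hi hne => by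
      rw [mem_Icc] at hi
      refine Finset.sum_eq_zero fun j hj => ?_
      rw [mem_range] at hj
      rw [Q.bracket_comm i s j k hi.1 hi.2 hs1 hsm hne (by omega) (by omega), smul_zero])]
    rw [Finset.sum_eq_add_of_mem 0 (n - k) (by rw [mem_range]; omega) (by rw [mem_range]; omega)
      (by omega) (fun j hj hj0 => by
        rw [mem_range] at hj
        rw [Q.bracket_zero s j k (by omega) hsm (by omega) (by omega) (by omega)
          (by omega) (by omega), smul_zero])]
    rw [Q.bracket_e0 s k hs1 hsm hk1 hk2]
    have hk' : n - (n - k) = k := by omega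
    have hp := Q.bracket_pair s (n - k) hs1 hsm (by omega) (by omega)
    rw [hk'] at hp
    rw [hp, smul_smul, mul_comm]
  -- Lemma B : bracketing with e s 0 raises the filtration
  have hTstep : ∀ k, 1 ≤ k → ∀ x ∈ T k, ⁅Q.e s 0, x⁆ ∈ T (k + 1) := by
    intro k hk x hx
    induction hx using Submodule.span_induction with
    | mem x hgen =>
      obtain ⟨j, ⟨hj1, hj2⟩, rfl⟩ := hgen
      rcases eq_or_ne j n with rfl | hjn
      · rw [Q.bracket_e0_n s hs1 hsm]; exact Submodule.zero_mem _
      rcases eq_or_ne j (n - 1) with rfl | hjn1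
      · rw [Q.bracket_e0_top s hs1 hsm]; exact Submodule.zero_mem _
      · rw [Q.bracket_e0 s j hs1 hsm (by omega) (by omega)]
        exact hmemT _ _ (by omega) (by omega)
    | zero => rw [lie_zero]; exact Submodule.zero_mem _
    | add x y hx hy ihx ihy => rw [lie_add]; exact Submodule.add_mem _ ihx ihy
    | smul t x hx ihx => rw [lie_smul]; exact Submodule.smul_mem _ _ ihx
  -- Main induction
  have hmain : ∀ k, 2 ≤ k → k ≤ n - 1 → ∃ z ∈ T (k + 1),
      δ (Q.e s k) = (((k - 1 : ℕ) : ℂ) * c s 0 s 0 + c s 1 s 1) • Q.e s k + z := by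
    intro k hk2
    induction k, hk2 using Nat.le_induction with
    | base =>
      intro _
      have he2 : Q.e s 2 = ⁅Q.e s 0, Q.e s 1⁆ :=
        (Q.bracket_e0 s 1 hs1 hsm le_rfl (by omega)).symm
      have hsum1 : ⁅Q.e s 0, δ (Q.e s 1)⁆
          = ∑ j ∈ range n, c s 1 s j • ⁅Q.e s 0, Q.e s j⁆ := by
        rw [hc s 1 hs1 hsm le_rfl, lie_add]
        simp only [my_lie_sum, lie_smul]
        have h2 : ∑ i ∈ Icc 1 r, c s 1 i n • ⁅Q.e s 0, Q.e i n⁆ = 0 := by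
          refine Finset.sum_eq_zero fun i hi => ?_
          rw [mem_Icc] at hi
          rcases eq_or_ne i s with rfl | hne
          · rw [Q.bracket_e0_n i hi.1 (le_trans hi.2 hrm), smul_zero]
          · rw [Q.bracket_comm s i 0 n hs1 hsm hi.1 (le_trans hi.2 hrm) (Ne.symm hne)
              (by omega) le_rfl, smul_zero]
        rw [h2, add_zero]
        rw [Finset.sum_eq_single_of_mem s hsIcc (fun i hi hne => by
          rw [mem_Icc] at hi
          refine Finset.sum_eq_zero fun j hj => ?_
          rw [mem_range] at hj
          rw [Q.bracket_comm s i 0 j hs1 hsm hi.1 hi.2 (Ne.symm hne) (by omega) (by omega),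
            smul_zero])]
      have hsplit : ∑ j ∈ range n, c s 1 s j • ⁅Q.e s 0, Q.e s j⁆
          = c s 1 s 1 • Q.e s 2
            + ∑ j ∈ (range n).erase 1, c s 1 s j • ⁅Q.e s 0, Q.e s j⁆ := by
        rw [← Finset.add_sum_erase _ _ (show (1:ℕ) ∈ range n by rw [mem_range]; omega),
          ← he2]
      have hrest : (∑ j ∈ (range n).erase 1, c s 1 s j • ⁅Q.e s 0, Q.e s j⁆) ∈ T 3 := by
        refine Submodule.sum_mem _ fun j hj => ?_
        rw [mem_erase, mem_range] at hj
        rcases eq_or_ne j 0 with rfl | hj0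
        · rw [lie_self, smul_zero]; exact Submodule.zero_mem _
        rcases eq_or_ne j (n - 1) with rfl | hjn1
        · rw [Q.bracket_e0_top s hs1 hsm, smul_zero]; exact Submodule.zero_mem _
        · rw [Q.bracket_e0 s j hs1 hsm (by omega) (by omega)]
          exact Submodule.smul_mem _ _ (hmemT 3 (j + 1) (by omega) (by omega))
      refine ⟨(∑ j ∈ (range n).erase 1, c s 1 s j • ⁅Q.e s 0, Q.e s j⁆)
          + ((-1 : ℂ) ^ (n - 1) * c s 0 s (n - 1)) • Q.e s n,
        Submodule.add_mem _ hrest (Submodule.smul_mem _ _ (hmemT 3 n (by omega) le_rfl)), ?_⟩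
      rw [he2, LieDerivation.apply_lie_eq_add, hbrA 1 le_rfl (by omega), hsum1, hsplit, ← he2,
        show (1 + 1 : ℕ) = 2 from rfl, show ((2 - 1 : ℕ) : ℂ) = 1 by norm_num]
      module
    | succ k hk2 ih =>
      intro hk1
      obtain ⟨z, hz, hδ⟩ := ih (by omega)
      have he : Q.e s (k + 1) = ⁅Q.e s 0, Q.e s k⁆ :=
        (Q.bracket_e0 s k hs1 hsm (by omega) (by omega)).symm
      rw [he, LieDerivation.apply_lie_eq_add, hδ, hbrA k (by omega) (by omega), lie_add,
        lie_smul, ← he]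
      refine ⟨⁅Q.e s 0, z⁆ + ((-1 : ℂ) ^ (n - k) * c s 0 s (n - k)) • Q.e s n,
        Submodule.add_mem _ (hTstep (k + 1) (by omega) z hz)
          (Submodule.smul_mem _ _ (hmemT _ _ (by omega) le_rfl)), ?_⟩
      have hcast : ((k + 1 - 1 : ℕ) : ℂ) = ((k - 1 : ℕ) : ℂ) + 1 := by
        push_cast [Nat.cast_sub (by omega : 1 ≤ k)]; ring
      rw [hcast]
      module
  -- Final assembly
  obtain ⟨z, hz, hδ⟩ := hmain (n - 1) (by omega) le_rfl
  have hzz : ∃ t : ℂ, z = t • Q.e s n := by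
    rw [hT_def] at hz
    simp only [show n - 1 + 1 = n by omega, Set.Icc_self, Set.image_singleton] at hz
    exact (Submodule.mem_span_singleton.mp hz).imp fun t ht => ht.symm
  obtain ⟨t, rfl⟩ := hzz
  have hpair : ⁅Q.e s 1, Q.e s (n - 1)⁆ = -Q.e s n := by
    rw [Q.bracket_pair s 1 hs1 hsm le_rfl (by omega)]
    simp
  have he : Q.e s n = -⁅Q.e s 1, Q.e s (n - 1)⁆ := by rw [hpair, neg_neg]
  have hz0 : ⁅Q.e s 1, Q.e s n⁆ = 0 :=
    Q.bracket_zero s 1 n hs1 hsm le_rfl (by omega) (by omega) le_rfl (by omega)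
  have hbr1 : ⁅δ (Q.e s 1), Q.e s (n - 1)⁆ = c s 1 s 1 • (-Q.e s n) := by
    rw [hc s 1 hs1 hsm le_rfl, add_lie]
    simp only [my_sum_lie, smul_lie]
    have h2 : ∑ i ∈ Icc 1 r, c s 1 i n • ⁅Q.e i n, Q.e s (n - 1)⁆ = 0 := by
      refine Finset.sum_eq_zero fun i hi => ?_
      rw [mem_Icc] at hi
      rcases eq_or_ne i s with rfl | hne
      · rw [Q.bracket_zero i n (n - 1) hi.1 (le_trans hi.2 hrm) (by omega) le_rfl (by omega)
          (by omega) (by omega), smul_zero]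
      · rw [Q.bracket_comm i s n (n - 1) hi.1 (le_trans hi.2 hrm) hs1 hsm hne le_rfl
          (by omega), smul_zero]
    rw [h2, add_zero]
    rw [Finset.sum_eq_single_of_mem s hsIcc (fun i hi hne => by
      rw [mem_Icc] at hi
      refine Finset.sum_eq_zero fun j hj => ?_
      rw [mem_range] at hj
      rw [Q.bracket_comm i s j (n - 1) hi.1 hi.2 hs1 hsm hne (by omega) (by omega),
        smul_zero])]
    rw [Finset.sum_eq_single_of_mem 1 (by rw [mem_range]; omega) (fun j hj hj1 => by
      rw [mem_range] at hj
      rcases eq_or_ne j 0 with rfl | hj0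
      · rw [Q.bracket_e0_top s hs1 hsm, smul_zero]
      · rw [Q.bracket_zero s j (n - 1) hs1 hsm (by omega) (by omega) (by omega) (by omega)
          (by omega), smul_zero])]
    rw [hpair]
  rw [show n - 1 - 1 = n - 2 from by omega] at hδ
  rw [he, map_neg, LieDerivation.apply_lie_eq_add, hδ, lie_add, lie_smul, lie_smul, hz0,
    hpair, hbr1]
  module
end

section
/- Let N = N(Q_n, m, r) be a quasi Q_n-filiform Lie algebra. Then the derivation algebra Der N is a solvable Lie algebra. -/
open Finset

namespace QQFProof

variable {n m r : ℕ} {N : Type*} [LieRing N] [LieAlgebra ℂ N]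

/-- index type for the distinguished basis -/
abbrev Idx (m n r : ℕ) := (Fin m × Fin n) ⊕ (Fin r)

variable (Q : QuasiQnFiliform n m r N)

/-- the distinguished basis family -/
def fam : Idx m n r → N :=
  Sum.elim (fun p : Fin m × Fin n => Q.e ((p.1 : ℕ) + 1) (p.2 : ℕ))
    (fun t : Fin r => Q.e ((t : ℕ) + 1) n)

@[simp] lemma fam_inl (p : Fin m × Fin n) : fam Q (.inl p) = Q.e ((p.1 : ℕ) + 1) (p.2 : ℕ) := rfl
@[simp] lemma fam_inr (t : Fin r) : fam Q (.inr t) = Q.e ((t : ℕ) + 1) n := rfl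

/-- the distinguished basis -/
noncomputable def bas : Module.Basis (Idx m n r) ℂ N :=
  Module.Basis.mk (v := fam Q) Q.basis_indep (by rw [show Submodule.span ℂ (Set.range (fam Q)) = ⊤ from Q.basis_span])

@[simp] lemma bas_apply (idx : Idx m n r) : bas Q idx = fam Q idx := Module.Basis.mk_apply _ _ _

lemma top_span : Submodule.span ℂ (Set.range (fam Q)) = ⊤ := Q.basis_span

/-- span induction helper -/
lemma spanInd {s : Set N} (q : N → Prop) (h0 : q 0)
    (hadd : ∀ x y, q x → q y → q (x + y)) (hsmul : ∀ (c : ℂ) x, q x → q (c • x))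
    (hmem : ∀ x ∈ s, q x) : ∀ x ∈ Submodule.span ℂ s, q x := fun _x hx =>
  Submodule.span_induction (p := fun y _ => q y) hmem h0 (fun a b _ _ => hadd a b)
    (fun c y _ => hsmul c y) hx

/-- induction over all of `N` using the distinguished basis -/
lemma topInd (q : N → Prop) (h0 : q 0)
    (hadd : ∀ x y, q x → q y → q (x + y)) (hsmul : ∀ (c : ℂ) x, q x → q (c • x))
    (hgen : ∀ idx, q (fam Q idx)) : ∀ x, q x := by
  intro x
  have hx : x ∈ Submodule.span ℂ (Set.range (fam Q)) := by rw [top_span]; trivial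
  exact spanInd q h0 hadd hsmul (by rintro y ⟨idx, rfl⟩; exact hgen idx) x hx

/-- the submodule underlying the lower central series -/
def lcsS (N : Type*) [LieRing N] [LieAlgebra ℂ N] (k : ℕ) : Submodule ℂ N :=
  (LieModule.lowerCentralSeries ℂ N N k : LieSubmodule ℂ N N)

lemma mem_lcsS_iff (k : ℕ) (x : N) :
    x ∈ lcsS N k ↔ x ∈ LieModule.lowerCentralSeries ℂ N N k := Iff.rfl

lemma lie_lcs {k : ℕ} (y : N) {x : N} (hx : x ∈ lcsS N k) : ⁅y, x⁆ ∈ lcsS N (k + 1) := by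
  rw [mem_lcsS_iff, LieModule.lowerCentralSeries_succ]
  exact LieSubmodule.lie_mem_lie (LieSubmodule.mem_top y) hx

lemma lcsS_antitone : Antitone (lcsS N) := fun a b h =>
  (LieSubmodule.toSubmodule_le_toSubmodule _ _).mpr (LieModule.antitone_lowerCentralSeries ℂ N N h)

/-- span-induction description of a step of the lower central series -/
lemma lcsS_succ_le {k : ℕ} (M : Submodule ℂ N)
    (h : ∀ (y : N), ∀ x ∈ lcsS N k, ⁅y, x⁆ ∈ M) : lcsS N (k+1) ≤ M := by
  intro z hz
  rw [mem_lcsS_iff, LieModule.lowerCentralSeries_succ, ← LieSubmodule.mem_toSubmodule,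
    LieSubmodule.lieIdeal_oper_eq_linear_span'] at hz
  refine spanInd (fun w => w ∈ M) (zero_mem M) (fun a b ha hb => add_mem ha hb)
    (fun c a ha => Submodule.smul_mem M c ha) ?_ z hz
  rintro w ⟨y, -, x, hx, rfl⟩
  exact h y x hx


variable (hn5 : 5 ≤ n) (hrm : r ≤ m)

section Struct
include Q hn5

lemma e_mem_lcs (a : Fin m) : ∀ k, k ≤ n - 2 → Q.e ((a : ℕ) + 1) (k + 1) ∈ lcsS N k := by
  intro k
  induction k with
  | zero => intro _; rw [mem_lcsS_iff]; trivial
  | succ k ih =>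
    intro hk
    have h1 : ⁅Q.e ((a : ℕ) + 1) 0, Q.e ((a : ℕ) + 1) (k + 1)⁆ = Q.e ((a : ℕ) + 1) (k + 2) :=
      Q.bracket_e0 _ _ (by omega) (by omega) (by omega) (by omega)
    have := lie_lcs (Q.e ((a : ℕ) + 1) 0) (ih (by omega))
    rw [h1] at this
    exact this

lemma pair1 (a : Fin m) (ha : (a : ℕ) < m) :
    ⁅Q.e ((a : ℕ) + 1) 1, Q.e ((a : ℕ) + 1) (n - 1)⁆ = -Q.e ((a : ℕ) + 1) n := by
  have := Q.bracket_pair ((a : ℕ) + 1) 1 (by omega) (by omega) le_rfl (by omega)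
  rw [this]; simp

lemma e_n_mem_lcs (a : Fin m) : Q.e ((a : ℕ) + 1) n ∈ lcsS N (n - 1) := by
  have h1 : Q.e ((a : ℕ) + 1) (n - 1) ∈ lcsS N (n - 2) := by
    have := e_mem_lcs Q hn5 a (n - 2) le_rfl
    have h : n - 2 + 1 = n - 1 := by omega
    rwa [h] at this
  have h2 := lie_lcs (Q.e ((a : ℕ) + 1) 1) h1
  rw [pair1 Q hn5 a a.isLt] at h2
  have h : n - 2 + 1 = n - 1 := by omega
  rw [h] at h2
  have := neg_mem h2
  rwa [neg_neg] at this

/-- the span of the top vectors `e_{in}`, `i ≤ r` -/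
def SS : Submodule ℂ N := Submodule.span ℂ (Set.range fun t : Fin r => Q.e ((t : ℕ) + 1) n)

include hrm

lemma SS_eq_lcs : SS Q = lcsS N (n - 1) := by
  haveI := Q.findim
  refine Submodule.eq_of_le_of_finrank_le ?_ ?_
  · rw [SS, Submodule.span_le]
    rintro x ⟨t, rfl⟩
    have ht : (t : ℕ) < m := by omega
    exact e_n_mem_lcs Q hn5 ⟨(t : ℕ), ht⟩
  · have h1 : Module.finrank ℂ (lcsS N (n - 1)) = r := Q.rank_lcs
    have h2 : Module.finrank ℂ (SS Q) = r := by
      rw [SS, finrank_span_eq_card]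
      · simp
      · exact Q.basis_indep.comp Sum.inr Sum.inr_injective
    rw [h1, h2]

lemma e_n_mem_SS (a : Fin m) : Q.e ((a : ℕ) + 1) n ∈ SS Q := by
  rw [SS_eq_lcs Q hn5 hrm]; exact e_n_mem_lcs Q hn5 a

omit hn5 hrm in
lemma repr_SS (x : N) (hx : x ∈ SS Q) (p : Fin m × Fin n) :
    (bas Q).repr x (.inl p) = 0 := by
  refine spanInd (fun y => (bas Q).repr y (.inl p) = 0) (by simp) ?_ ?_ ?_ x hx
  · intro a b ha hb; rw [map_add]; simp [ha, hb]
  · intro c a ha; rw [map_smul]; simp [ha]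
  · rintro y ⟨t, rfl⟩
    show (bas Q).repr (Q.e ((t : ℕ) + 1) n) (.inl p) = 0
    have h : Q.e ((t : ℕ) + 1) n = bas Q (.inr t) := by simp
    rw [h, Module.Basis.repr_self, Finsupp.single_apply]
    simp

lemma repr_e_n (a : Fin m) (p : Fin m × Fin n) :
    (bas Q).repr (Q.e ((a : ℕ) + 1) n) (.inl p) = 0 :=
  repr_SS Q (Q.e ((a : ℕ) + 1) n) (e_n_mem_SS Q hn5 hrm a) p

lemma central (a : Fin m) : ∀ x : N, ⁅x, Q.e ((a : ℕ) + 1) n⁆ = 0 := by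
  refine topInd Q (fun x => ⁅x, Q.e ((a : ℕ) + 1) n⁆ = 0) (zero_lie _) ?_ ?_ ?_
  · intro x y hx hy; rw [add_lie, hx, hy, add_zero]
  · intro c x hx; rw [smul_lie, hx, smul_zero]
  · intro idx
    rcases idx with ⟨t, u⟩ | t
    · show ⁅Q.e ((t : ℕ) + 1) ((u : ℕ)), Q.e ((a : ℕ) + 1) n⁆ = 0
      by_cases ht : (t : ℕ) = (a : ℕ)
      · rcases Nat.eq_zero_or_pos (u : ℕ) with hu | hu
        · rw [hu, ht]; exact Q.bracket_e0_n _ (by omega) (by omega)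
        · rw [ht]
          exact Q.bracket_zero _ _ _ (by omega) (by omega) (by omega) (by omega) (by omega)
            (by omega) (by omega)
      · exact Q.bracket_comm _ _ _ _ (by omega) (by omega) (by omega) (by omega) (by omega)
          (by omega) (by omega)
    · show ⁅Q.e ((t : ℕ) + 1) n, Q.e ((a : ℕ) + 1) n⁆ = 0
      by_cases ht : (t : ℕ) = (a : ℕ)
      · rw [ht]
        exact Q.bracket_zero _ _ _ (by omega) (by omega) (by omega) (by omega) (by omega)
          (by omega) (by omega)
      · exact Q.bracket_comm _ _ _ _ (by omega) (by omega) (by omega) (by omega) (by omega)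
          (by omega) (by omega)

lemma central_SS (x : N) (hx : x ∈ SS Q) (y : N) : ⁅y, x⁆ = 0 := by
  refine spanInd (fun z => ⁅y, z⁆ = (0 : N)) (lie_zero _) ?_ ?_ ?_ x hx
  · intro a b ha hb; rw [lie_add, ha, hb, add_zero]
  · intro c a ha; rw [lie_smul, ha, smul_zero]
  · rintro z ⟨t, rfl⟩
    have ht : (t : ℕ) < m := by omega
    have := central Q hn5 hrm ⟨(t : ℕ), ht⟩ y
    simpa using this

lemma lcs_n_bot : lcsS N n = ⊥ := by
  have h : n = (n - 1) + 1 := by omega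
  rw [h, eq_bot_iff]
  refine lcsS_succ_le _ ?_
  intro y x hx
  rw [← SS_eq_lcs Q hn5 hrm] at hx
  rw [central_SS Q hn5 hrm x hx y]
  exact Submodule.zero_mem ⊥

end Struct


section Repr
include Q hn5 hrm

omit Q hn5 hrm in
lemma inl_ne_of_val {t x : Fin m} {u y : Fin n} (h : (u : ℕ) ≠ (y : ℕ) ∨ (t : ℕ) ≠ (x : ℕ)) :
    (Sum.inl (t, u) : Idx m n r) ≠ Sum.inl (x, y) := by
  intro hc
  rw [Sum.inl.injEq, Prod.mk.injEq] at hc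
  rcases h with h | h
  · exact h (congrArg Fin.val hc.2)
  · exact h (congrArg Fin.val hc.1)

omit hn5 hrm in
lemma repr_e_basis (x : Fin m) (k : ℕ) (hk : k < n) (q1 : Fin m) (q2 : Fin n) :
    (bas Q).repr (Q.e ((x : ℕ) + 1) k) (.inl (q1, q2)) =
      if q1 = x ∧ (q2 : ℕ) = k then 1 else 0 := by
  have h : Q.e ((x : ℕ) + 1) k = bas Q (.inl (x, ⟨k, hk⟩)) := by simp
  rw [h, Module.Basis.repr_self, Finsupp.single_apply]
  by_cases hc : q1 = x ∧ (q2 : ℕ) = k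
  · have hinl : (Sum.inl (x, ⟨k, hk⟩) : Idx m n r) = Sum.inl (q1, q2) := by
      rw [Sum.inl.injEq, Prod.mk.injEq]
      exact ⟨hc.1.symm, Fin.ext (by simp [hc.2])⟩
    rw [if_pos hinl, if_pos hc]
  · have hinl : ¬((Sum.inl (x, ⟨k, hk⟩) : Idx m n r) = Sum.inl (q1, q2)) := by
      intro hcon
      rw [Sum.inl.injEq, Prod.mk.injEq] at hcon
      exact hc ⟨hcon.1.symm, by rw [← hcon.2]⟩
    rw [if_neg hinl, if_neg hc]

lemma reprL (a' : Fin m) (j' : ℕ) (h1 : 1 ≤ j') (h2 : j' ≤ n - 2) (idx : Idx m n r)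
    (q1 : Fin m) (q2 : Fin n) (hq2 : (q2 : ℕ) = j' + 1) :
    (bas Q).repr ⁅fam Q idx, Q.e ((a' : ℕ) + 1) j'⁆ (.inl (q1, q2)) =
      if q1 = a' ∧ idx = Sum.inl (a', (⟨0, by omega⟩ : Fin n)) then 1 else 0 := by
  rcases idx with ⟨t, u⟩ | t
  · show (bas Q).repr ⁅Q.e ((t : ℕ) + 1) (u : ℕ), Q.e ((a' : ℕ) + 1) j'⁆ _ = _
    by_cases ht : (t : ℕ) = (a' : ℕ)
    · rw [show ((t : ℕ)) = ((a' : ℕ)) from ht]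
      rcases Nat.eq_zero_or_pos (u : ℕ) with hu | hu
      · rw [hu, Q.bracket_e0 _ _ (by omega) (by omega) h1 (by omega),
          repr_e_basis Q a' (j' + 1) (by omega) q1 q2]
        have hidx : (Sum.inl (t, u) : Idx m n r) = Sum.inl (a', ⟨0, by omega⟩) := by
          rw [Sum.inl.injEq, Prod.mk.injEq]
          exact ⟨Fin.ext ht, Fin.ext (by simpa using hu)⟩
        rw [hidx]
        by_cases hq1 : q1 = a'
        · rw [if_pos ⟨hq1, hq2⟩, if_pos ⟨hq1, rfl⟩]
        · rw [if_neg (fun h => hq1 h.1), if_neg (fun h => hq1 h.1)]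
      · have hne : ¬((Sum.inl (t, u) : Idx m n r) = Sum.inl (a', ⟨0, by omega⟩)) :=
          inl_ne_of_val (Or.inl (by simpa using by omega))
        rw [if_neg (fun h => hne h.2)]
        by_cases hsum : (u : ℕ) + j' = n
        · have hj' : j' = n - (u : ℕ) := by omega
          rw [hj', Q.bracket_pair _ _ (by omega) (by omega) (by omega) (by omega), map_smul,
            Finsupp.smul_apply, repr_e_n Q hn5 hrm a' (q1, q2), smul_zero]
        · rw [Q.bracket_zero _ _ _ (by omega) (by omega) (by omega) (by omega) h1 (by omega)
            (by omega), map_zero, Finsupp.zero_apply]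
    · rw [Q.bracket_comm _ _ _ _ (by omega) (by omega) (by omega) (by omega) (by omega)
        (by omega) (by omega), map_zero, Finsupp.zero_apply, if_neg]
      rintro ⟨-, hcon⟩
      exact inl_ne_of_val (Or.inr ht) hcon
  · show (bas Q).repr ⁅Q.e ((t : ℕ) + 1) n, Q.e ((a' : ℕ) + 1) j'⁆ _ = _
    rw [if_neg (by simp)]
    by_cases ht : (t : ℕ) = (a' : ℕ)
    · rw [show ((t : ℕ)) = ((a' : ℕ)) from ht,
        Q.bracket_zero _ _ _ (by omega) (by omega) (by omega) (by omega) h1 (by omega)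
          (by omega), map_zero, Finsupp.zero_apply]
    · rw [Q.bracket_comm _ _ _ _ (by omega) (by omega) (by omega) (by omega) (by omega)
        (by omega) (by omega), map_zero, Finsupp.zero_apply]

lemma reprR0_eq2 (a : Fin m) (idx : Idx m n r) (q2 : Fin n) (hq2 : (q2 : ℕ) = 2) :
    (bas Q).repr ⁅Q.e ((a : ℕ) + 1) 0, fam Q idx⁆ (.inl (a, q2)) =
      if idx = Sum.inl (a, (⟨1, by omega⟩ : Fin n)) then 1 else 0 := by
  rcases idx with ⟨t, u⟩ | t
  · show (bas Q).repr ⁅Q.e ((a : ℕ) + 1) 0, Q.e ((t : ℕ) + 1) (u : ℕ)⁆ _ = _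
    by_cases ht : (t : ℕ) = (a : ℕ)
    · rw [show ((t : ℕ)) = ((a : ℕ)) from ht]
      rcases Nat.eq_zero_or_pos (u : ℕ) with hu | hu
      · rw [hu, lie_self, map_zero, Finsupp.zero_apply, if_neg]
        exact inl_ne_of_val (Or.inl (by simp [hu]))
      · by_cases hu2 : (u : ℕ) ≤ n - 2
        · rw [Q.bracket_e0 _ _ (by omega) (by omega) hu hu2,
            repr_e_basis Q a ((u : ℕ) + 1) (by omega) a q2]
          by_cases hu1 : (u : ℕ) = 1
          · have hidx : (Sum.inl (t, u) : Idx m n r) = Sum.inl (a, ⟨1, by omega⟩) := by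
              rw [Sum.inl.injEq, Prod.mk.injEq]
              exact ⟨Fin.ext ht, Fin.ext (by simpa using hu1)⟩
            rw [if_pos ⟨rfl, by omega⟩, if_pos hidx]
          · rw [if_neg (fun h => by omega), if_neg]
            exact inl_ne_of_val (Or.inl (by simpa using by omega))
        · have hu' : (u : ℕ) = n - 1 := by omega
          rw [hu', Q.bracket_e0_top _ (by omega) (by omega), map_zero, Finsupp.zero_apply,
            if_neg]
          exact inl_ne_of_val (Or.inl (by simpa using by omega))
    · rw [Q.bracket_comm _ _ _ _ (by omega) (by omega) (by omega) (by omega) (by omega)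
        (by omega) (by omega), map_zero, Finsupp.zero_apply, if_neg]
      exact inl_ne_of_val (Or.inr ht)
  · show (bas Q).repr ⁅Q.e ((a : ℕ) + 1) 0, Q.e ((t : ℕ) + 1) n⁆ _ = _
    rw [if_neg (by simp)]
    by_cases ht : (t : ℕ) = (a : ℕ)
    · rw [show ((t : ℕ)) = ((a : ℕ)) from ht, Q.bracket_e0_n _ (by omega) (by omega), map_zero,
        Finsupp.zero_apply]
    · rw [Q.bracket_comm _ _ _ _ (by omega) (by omega) (by omega) (by omega) (by omega)
        (by omega) (by omega), map_zero, Finsupp.zero_apply]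

lemma reprR0_ne (a : Fin m) (idx : Idx m n r) (q1 : Fin m) (q2 : Fin n) (hne : q1 ≠ a) :
    (bas Q).repr ⁅Q.e ((a : ℕ) + 1) 0, fam Q idx⁆ (.inl (q1, q2)) = 0 := by
  rcases idx with ⟨t, u⟩ | t
  · show (bas Q).repr ⁅Q.e ((a : ℕ) + 1) 0, Q.e ((t : ℕ) + 1) (u : ℕ)⁆ _ = _
    by_cases ht : (t : ℕ) = (a : ℕ)
    · rw [show ((t : ℕ)) = ((a : ℕ)) from ht]
      rcases Nat.eq_zero_or_pos (u : ℕ) with hu | hu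
      · rw [hu, lie_self, map_zero, Finsupp.zero_apply]
      · by_cases hu2 : (u : ℕ) ≤ n - 2
        · rw [Q.bracket_e0 _ _ (by omega) (by omega) hu hu2,
            repr_e_basis Q a ((u : ℕ) + 1) (by omega) q1 q2, if_neg (fun h => hne h.1)]
        · have hu' : (u : ℕ) = n - 1 := by omega
          rw [hu', Q.bracket_e0_top _ (by omega) (by omega), map_zero, Finsupp.zero_apply]
    · rw [Q.bracket_comm _ _ _ _ (by omega) (by omega) (by omega) (by omega) (by omega)
        (by omega) (by omega), map_zero, Finsupp.zero_apply]
  · show (bas Q).repr ⁅Q.e ((a : ℕ) + 1) 0, Q.e ((t : ℕ) + 1) n⁆ _ = _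
    by_cases ht : (t : ℕ) = (a : ℕ)
    · rw [show ((t : ℕ)) = ((a : ℕ)) from ht, Q.bracket_e0_n _ (by omega) (by omega), map_zero,
        Finsupp.zero_apply]
    · rw [Q.bracket_comm _ _ _ _ (by omega) (by omega) (by omega) (by omega) (by omega)
        (by omega) (by omega), map_zero, Finsupp.zero_apply]

lemma reprR1 (a : Fin m) (idx : Idx m n r) (q1 : Fin m) (q2 : Fin n)
    (hne : ¬(q1 = a ∧ (q2 : ℕ) = 2)) :
    (bas Q).repr ⁅Q.e ((a : ℕ) + 1) 1, fam Q idx⁆ (.inl (q1, q2)) = 0 := by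
  rcases idx with ⟨t, u⟩ | t
  · show (bas Q).repr ⁅Q.e ((a : ℕ) + 1) 1, Q.e ((t : ℕ) + 1) (u : ℕ)⁆ _ = _
    by_cases ht : (t : ℕ) = (a : ℕ)
    · rw [show ((t : ℕ)) = ((a : ℕ)) from ht]
      rcases Nat.eq_zero_or_pos (u : ℕ) with hu | hu
      · have hsk : ⁅Q.e ((a : ℕ) + 1) 1, Q.e ((a : ℕ) + 1) ((u : ℕ))⁆ =
            -⁅Q.e ((a : ℕ) + 1) 0, Q.e ((a : ℕ) + 1) 1⁆ := by
          rw [hu, ← lie_skew]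
        rw [hsk, Q.bracket_e0 _ _ (by omega) (by omega) (by omega) (by omega), map_neg,
          Finsupp.neg_apply, repr_e_basis Q a 2 (by omega) q1 q2, if_neg hne, neg_zero]
      · by_cases hsum : 1 + (u : ℕ) = n
        · have hj' : (u : ℕ) = n - 1 := by omega
          rw [hj', Q.bracket_pair _ _ (by omega) (by omega) (by omega) (by omega), map_smul,
            Finsupp.smul_apply, repr_e_n Q hn5 hrm a (q1, q2), smul_zero]
        · rw [Q.bracket_zero _ _ _ (by omega) (by omega) (by omega) (by omega) (by omega)
            (by omega) (by omega), map_zero, Finsupp.zero_apply]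
    · rw [Q.bracket_comm _ _ _ _ (by omega) (by omega) (by omega) (by omega) (by omega)
        (by omega) (by omega), map_zero, Finsupp.zero_apply]
  · show (bas Q).repr ⁅Q.e ((a : ℕ) + 1) 1, Q.e ((t : ℕ) + 1) n⁆ _ = _
    by_cases ht : (t : ℕ) = (a : ℕ)
    · rw [show ((t : ℕ)) = ((a : ℕ)) from ht,
        Q.bracket_zero _ _ _ (by omega) (by omega) (by omega) (by omega) (by omega) (by omega)
          (by omega), map_zero, Finsupp.zero_apply]
    · rw [Q.bracket_comm _ _ _ _ (by omega) (by omega) (by omega) (by omega) (by omega)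
        (by omega) (by omega), map_zero, Finsupp.zero_apply]

end Repr


section Expand

/-- right bracket as a linear map -/
def lieR (y : N) : N →ₗ[ℂ] N where
  toFun v := ⁅v, y⁆
  map_add' a b := add_lie a b y
  map_smul' c a := smul_lie c a y

/-- left bracket as a linear map -/
def lieL (x : N) : N →ₗ[ℂ] N where
  toFun v := ⁅x, v⁆
  map_add' a b := lie_add x a b
  map_smul' c a := lie_smul c x a

include Q

lemma expand_l (v y : N) : ⁅v, y⁆ = ∑ idx, (bas Q).repr v idx • ⁅fam Q idx, y⁆ := by
  have h : ⁅v, y⁆ = lieR y v := rfl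
  rw [h]
  conv_lhs => rw [← Module.Basis.sum_repr (bas Q) v]
  rw [map_sum]
  exact Finset.sum_congr rfl fun idx _ => by
    rw [map_smul]; show _ • ⁅(bas Q) idx, y⁆ = _; rw [bas_apply]

lemma expand_r (x v : N) : ⁅x, v⁆ = ∑ idx, (bas Q).repr v idx • ⁅x, fam Q idx⁆ := by
  have h : ⁅x, v⁆ = lieL x v := rfl
  rw [h]
  conv_lhs => rw [← Module.Basis.sum_repr (bas Q) v]
  rw [map_sum]
  exact Finset.sum_congr rfl fun idx _ => by
    rw [map_smul]; show _ • ⁅x, (bas Q) idx⁆ = _; rw [bas_apply]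

end Expand

section Coeff
include Q hn5 hrm

lemma coeff00 (D : LieDerivation ℂ N N) (a a' : Fin m) (hne : a ≠ a') :
    (bas Q).repr (D (Q.e ((a : ℕ) + 1) 0)) (.inl (a', (⟨0, by omega⟩ : Fin n))) = 0 := by
  have hvne : ((a : ℕ) + 1) ≠ ((a' : ℕ) + 1) := by
    intro h; exact hne (Fin.ext (by omega))
  have hrel : ⁅Q.e ((a : ℕ) + 1) 0, Q.e ((a' : ℕ) + 1) (n - 2)⁆ = 0 :=
    Q.bracket_comm _ _ _ _ (by omega) (by omega) (by omega) (by omega) hvne (by omega) (by omega)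
  have hD := D.apply_lie_eq_add (Q.e ((a : ℕ) + 1) 0) (Q.e ((a' : ℕ) + 1) (n - 2))
  rw [hrel, map_zero, expand_r Q (Q.e ((a : ℕ) + 1) 0) (D (Q.e ((a' : ℕ) + 1) (n - 2))),
    expand_l Q (D (Q.e ((a : ℕ) + 1) 0)) (Q.e ((a' : ℕ) + 1) (n - 2))] at hD
  have h2 := congrArg ((bas Q).coord (.inl (a', (⟨n - 1, by omega⟩ : Fin n)))) hD
  simp only [map_zero, map_add, map_sum, map_smul, smul_eq_mul, Module.Basis.coord_apply] at h2
  rw [Finset.sum_eq_zero (fun idx _ => by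
      rw [reprR0_ne Q hn5 hrm a idx a' _ (Ne.symm hne), mul_zero]),
    zero_add] at h2
  have h3 : ∀ idx ∈ Finset.univ (α := Idx m n r),
      (bas Q).repr (D (Q.e ((a : ℕ) + 1) 0)) idx *
        (bas Q).repr ⁅fam Q idx, Q.e ((a' : ℕ) + 1) (n - 2)⁆
          (.inl (a', (⟨n - 1, by omega⟩ : Fin n))) =
      if idx = Sum.inl (a', (⟨0, by omega⟩ : Fin n)) then
        (bas Q).repr (D (Q.e ((a : ℕ) + 1) 0)) idx else 0 := by
    intro idx _
    rw [reprL Q hn5 hrm a' (n - 2) (by omega) (by omega) idx a' _ (by simp; omega)]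
    by_cases hc : idx = Sum.inl (a', (⟨0, by omega⟩ : Fin n))
    · rw [if_pos ⟨rfl, hc⟩, if_pos hc, mul_one]
    · rw [if_neg (fun h => hc h.2), if_neg hc, mul_zero]
  rw [Finset.sum_congr rfl h3, Finset.sum_ite_eq' Finset.univ] at h2
  simpa using h2.symm

lemma coeff10_ne (D : LieDerivation ℂ N N) (a a' : Fin m) (hne : a ≠ a') :
    (bas Q).repr (D (Q.e ((a : ℕ) + 1) 1)) (.inl (a', (⟨0, by omega⟩ : Fin n))) = 0 := by
  have hvne : ((a : ℕ) + 1) ≠ ((a' : ℕ) + 1) := by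
    intro h; exact hne (Fin.ext (by omega))
  have hrel : ⁅Q.e ((a : ℕ) + 1) 1, Q.e ((a' : ℕ) + 1) 1⁆ = 0 :=
    Q.bracket_comm _ _ _ _ (by omega) (by omega) (by omega) (by omega) hvne (by omega) (by omega)
  have hD := D.apply_lie_eq_add (Q.e ((a : ℕ) + 1) 1) (Q.e ((a' : ℕ) + 1) 1)
  rw [hrel, map_zero, expand_r Q (Q.e ((a : ℕ) + 1) 1) (D (Q.e ((a' : ℕ) + 1) 1)),
    expand_l Q (D (Q.e ((a : ℕ) + 1) 1)) (Q.e ((a' : ℕ) + 1) 1)] at hD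
  have h2 := congrArg ((bas Q).coord (.inl (a', (⟨2, by omega⟩ : Fin n)))) hD
  simp only [map_zero, map_add, map_sum, map_smul, smul_eq_mul, Module.Basis.coord_apply] at h2
  rw [Finset.sum_eq_zero (fun idx _ => by
      rw [reprR1 Q hn5 hrm a idx a' _ (fun h => hne (h.1.symm)), mul_zero]),
    zero_add] at h2
  have h3 : ∀ idx ∈ Finset.univ (α := Idx m n r),
      (bas Q).repr (D (Q.e ((a : ℕ) + 1) 1)) idx *
        (bas Q).repr ⁅fam Q idx, Q.e ((a' : ℕ) + 1) 1⁆
          (.inl (a', (⟨2, by omega⟩ : Fin n))) =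
      if idx = Sum.inl (a', (⟨0, by omega⟩ : Fin n)) then
        (bas Q).repr (D (Q.e ((a : ℕ) + 1) 1)) idx else 0 := by
    intro idx _
    rw [reprL Q hn5 hrm a' 1 (by omega) (by omega) idx a' _ (by simp)]
    by_cases hc : idx = Sum.inl (a', (⟨0, by omega⟩ : Fin n))
    · rw [if_pos ⟨rfl, hc⟩, if_pos hc, mul_one]
    · rw [if_neg (fun h => hc h.2), if_neg hc, mul_zero]
  rw [Finset.sum_congr rfl h3, Finset.sum_ite_eq' Finset.univ] at h2
  simpa using h2.symm

lemma coeff10_eq (D : LieDerivation ℂ N N) (a : Fin m) :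
    (bas Q).repr (D (Q.e ((a : ℕ) + 1) 1)) (.inl (a, (⟨0, by omega⟩ : Fin n))) = 0 := by
  have hrel : ⁅Q.e ((a : ℕ) + 1) 1, Q.e ((a : ℕ) + 1) 2⁆ = 0 :=
    Q.bracket_zero _ _ _ (by omega) (by omega) (by omega) (by omega) (by omega) (by omega)
      (by omega)
  have hD := D.apply_lie_eq_add (Q.e ((a : ℕ) + 1) 1) (Q.e ((a : ℕ) + 1) 2)
  rw [hrel, map_zero, expand_r Q (Q.e ((a : ℕ) + 1) 1) (D (Q.e ((a : ℕ) + 1) 2)),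
    expand_l Q (D (Q.e ((a : ℕ) + 1) 1)) (Q.e ((a : ℕ) + 1) 2)] at hD
  have h2 := congrArg ((bas Q).coord (.inl (a, (⟨3, by omega⟩ : Fin n)))) hD
  simp only [map_zero, map_add, map_sum, map_smul, smul_eq_mul, Module.Basis.coord_apply] at h2
  rw [Finset.sum_eq_zero (fun idx _ => by
      rw [reprR1 Q hn5 hrm a idx a _ (fun h => by have := h.2; simp at this), mul_zero]),
    zero_add] at h2
  have h3 : ∀ idx ∈ Finset.univ (α := Idx m n r),
      (bas Q).repr (D (Q.e ((a : ℕ) + 1) 1)) idx *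
        (bas Q).repr ⁅fam Q idx, Q.e ((a : ℕ) + 1) 2⁆
          (.inl (a, (⟨3, by omega⟩ : Fin n))) =
      if idx = Sum.inl (a, (⟨0, by omega⟩ : Fin n)) then
        (bas Q).repr (D (Q.e ((a : ℕ) + 1) 1)) idx else 0 := by
    intro idx _
    rw [reprL Q hn5 hrm a 2 (by omega) (by omega) idx a _ (by simp)]
    by_cases hc : idx = Sum.inl (a, (⟨0, by omega⟩ : Fin n))
    · rw [if_pos ⟨rfl, hc⟩, if_pos hc, mul_one]
    · rw [if_neg (fun h => hc h.2), if_neg hc, mul_zero]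
  rw [Finset.sum_congr rfl h3, Finset.sum_ite_eq' Finset.univ] at h2
  simpa using h2.symm

lemma coeff11_ne (D : LieDerivation ℂ N N) (a a' : Fin m) (hne : a ≠ a') :
    (bas Q).repr (D (Q.e ((a' : ℕ) + 1) 1)) (.inl (a, (⟨1, by omega⟩ : Fin n))) = 0 := by
  have hvne : ((a : ℕ) + 1) ≠ ((a' : ℕ) + 1) := by
    intro h; exact hne (Fin.ext (by omega))
  have hrel : ⁅Q.e ((a : ℕ) + 1) 0, Q.e ((a' : ℕ) + 1) 1⁆ = 0 :=
    Q.bracket_comm _ _ _ _ (by omega) (by omega) (by omega) (by omega) hvne (by omega) (by omega)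
  have hD := D.apply_lie_eq_add (Q.e ((a : ℕ) + 1) 0) (Q.e ((a' : ℕ) + 1) 1)
  rw [hrel, map_zero, expand_r Q (Q.e ((a : ℕ) + 1) 0) (D (Q.e ((a' : ℕ) + 1) 1)),
    expand_l Q (D (Q.e ((a : ℕ) + 1) 0)) (Q.e ((a' : ℕ) + 1) 1)] at hD
  have h2 := congrArg ((bas Q).coord (.inl (a, (⟨2, by omega⟩ : Fin n)))) hD
  simp only [map_zero, map_add, map_sum, map_smul, smul_eq_mul, Module.Basis.coord_apply] at h2
  have h3 : ∀ idx ∈ Finset.univ (α := Idx m n r),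
      (bas Q).repr (D (Q.e ((a' : ℕ) + 1) 1)) idx *
        (bas Q).repr ⁅Q.e ((a : ℕ) + 1) 0, fam Q idx⁆
          (.inl (a, (⟨2, by omega⟩ : Fin n))) =
      if idx = Sum.inl (a, (⟨1, by omega⟩ : Fin n)) then
        (bas Q).repr (D (Q.e ((a' : ℕ) + 1) 1)) idx else 0 := by
    intro idx _
    rw [reprR0_eq2 Q hn5 hrm a idx _ (by simp)]
    by_cases hc : idx = Sum.inl (a, (⟨1, by omega⟩ : Fin n))
    · rw [if_pos hc, if_pos hc, mul_one]
    · rw [if_neg hc, if_neg hc, mul_zero]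
  rw [Finset.sum_congr rfl h3, Finset.sum_ite_eq' Finset.univ,
    Finset.sum_eq_zero (fun idx _ => by
      rw [reprL Q hn5 hrm a' 1 (by omega) (by omega) idx a _ (by simp),
        if_neg (fun h => hne h.1), mul_zero]),
    add_zero] at h2
  simpa using h2.symm

end Coeff


section StructTwo
include Q hn5 hrm

omit hn5 hrm in
lemma mem_of_repr (v : N) (M : Submodule ℂ N)
    (h : ∀ idx, fam Q idx ∈ M ∨ (bas Q).repr v idx = 0) : v ∈ M := by
  rw [← Module.Basis.sum_repr (bas Q) v]
  refine Submodule.sum_mem _ fun idx _ => ?_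
  rcases h idx with hm | hz
  · rw [bas_apply]; exact Submodule.smul_mem _ _ hm
  · rw [hz, zero_smul]; exact zero_mem M

omit hn5 hrm in
lemma e_mem_lcs' (hn5 : 5 ≤ n) (t : Fin m) (k : ℕ) (h1 : 1 ≤ k) (h2 : k ≤ n - 1) (j : ℕ)
    (hj : j ≤ k - 1) : Q.e ((t : ℕ) + 1) k ∈ lcsS N j := by
  have h := e_mem_lcs Q hn5 t (k - 1) (by omega)
  rw [show k - 1 + 1 = k by omega] at h
  exact lcsS_antitone (by omega) h

lemma e_n_mem_lcs' (t : Fin m) (j : ℕ) (hj : j ≤ n - 1) : Q.e ((t : ℕ) + 1) n ∈ lcsS N j :=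
  lcsS_antitone hj (e_n_mem_lcs Q hn5 t)

end StructTwo

/-- the span of the vectors `e_{i1}` -/
def WW (Q : QuasiQnFiliform n m r N) : Submodule ℂ N :=
  Submodule.span ℂ (Set.range fun a : Fin m => Q.e ((a : ℕ) + 1) 1)

section Diag
include Q hn5 hrm

lemma Da (D : LieDerivation ℂ N N) (a : Fin m) :
    D (Q.e ((a : ℕ) + 1) 0) -
      ((bas Q).repr (D (Q.e ((a : ℕ) + 1) 0)) (.inl (a, (⟨0, by omega⟩ : Fin n)))) •
        Q.e ((a : ℕ) + 1) 0 ∈ WW Q ⊔ lcsS N 1 := by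
  apply mem_of_repr
  intro idx
  rcases idx with ⟨t, u⟩ | t
  · rcases Nat.lt_or_ge (u : ℕ) 1 with hu | hu
    · right
      have hu0 : u = (⟨0, by omega⟩ : Fin n) := Fin.ext (by simpa using by omega)
      rw [hu0]
      rw [map_sub, map_smul, Finsupp.sub_apply, Finsupp.smul_apply,
        repr_e_basis Q a 0 (by omega) t _, smul_eq_mul]
      by_cases htt : t = a
      · subst htt
        rw [if_pos ⟨rfl, rfl⟩, mul_one, sub_self]
      · rw [if_neg (fun h => htt h.1), mul_zero,
          coeff00 Q hn5 hrm D a t (fun h => htt h.symm), sub_zero]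
    · rcases Nat.lt_or_ge (u : ℕ) 2 with hu2 | hu2
      · left
        apply Submodule.mem_sup_left
        have hu1 : (u : ℕ) = 1 := by omega
        show Q.e ((t : ℕ) + 1) (u : ℕ) ∈ WW Q
        rw [hu1]
        exact Submodule.subset_span ⟨t, rfl⟩
      · left
        apply Submodule.mem_sup_right
        show Q.e ((t : ℕ) + 1) (u : ℕ) ∈ lcsS N 1
        exact e_mem_lcs' Q hn5 t (u : ℕ) (by omega) (by omega) 1 (by omega)
  · left
    apply Submodule.mem_sup_right
    show Q.e ((t : ℕ) + 1) n ∈ lcsS N 1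
    exact e_n_mem_lcs' Q hn5 hrm ⟨(t : ℕ), by omega⟩ 1 (by omega)

lemma Db (D : LieDerivation ℂ N N) (a : Fin m) :
    D (Q.e ((a : ℕ) + 1) 1) -
      ((bas Q).repr (D (Q.e ((a : ℕ) + 1) 1)) (.inl (a, (⟨1, by omega⟩ : Fin n)))) •
        Q.e ((a : ℕ) + 1) 1 ∈ lcsS N 1 := by
  apply mem_of_repr
  intro idx
  rcases idx with ⟨t, u⟩ | t
  · rcases Nat.lt_or_ge (u : ℕ) 1 with hu | hu
    · right
      have hu0 : u = (⟨0, by omega⟩ : Fin n) := Fin.ext (by simpa using by omega)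
      rw [hu0]
      rw [map_sub, map_smul, Finsupp.sub_apply, Finsupp.smul_apply,
        repr_e_basis Q a 1 (by omega) t _, smul_eq_mul,
        if_neg (fun h => by exact absurd h.2 (by simp)), mul_zero, sub_zero]
      by_cases htt : t = a
      · subst htt; exact coeff10_eq Q hn5 hrm D t
      · exact coeff10_ne Q hn5 hrm D a t (fun h => htt h.symm)
    · rcases Nat.lt_or_ge (u : ℕ) 2 with hu2 | hu2
      · right
        have hu1 : u = (⟨1, by omega⟩ : Fin n) := Fin.ext (by simpa using by omega)
        rw [hu1]
        rw [map_sub, map_smul, Finsupp.sub_apply, Finsupp.smul_apply,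
          repr_e_basis Q a 1 (by omega) t _, smul_eq_mul]
        by_cases htt : t = a
        · subst htt
          rw [if_pos ⟨rfl, rfl⟩, mul_one, sub_self]
        · rw [if_neg (fun h => htt h.1), mul_zero, sub_zero]
          exact coeff11_ne Q hn5 hrm D t a htt
      · left
        show Q.e ((t : ℕ) + 1) (u : ℕ) ∈ lcsS N 1
        exact e_mem_lcs' Q hn5 t (u : ℕ) (by omega) (by omega) 1 (by omega)
  · left
    show Q.e ((t : ℕ) + 1) n ∈ lcsS N 1
    exact e_n_mem_lcs' Q hn5 hrm ⟨(t : ℕ), by omega⟩ 1 (by omega)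

end Diag

/-- upper part of the filtration, described by spanning vectors -/
def TT (Q : QuasiQnFiliform n m r N) (j : ℕ) : Submodule ℂ N :=
  Submodule.span ℂ
    ({x | ∃ (a : Fin m) (k : ℕ), j + 1 ≤ k ∧ k ≤ n - 1 ∧ x = Q.e ((a : ℕ) + 1) k} ∪
      Set.range fun t : Fin r => Q.e ((t : ℕ) + 1) n)

section Tlemmas
include Q hn5 hrm

omit hn5 hrm in
lemma SS_le_TT (j : ℕ) : SS Q ≤ TT Q j :=
  Submodule.span_mono Set.subset_union_right

omit hn5 hrm in
lemma e_mem_TT {a : Fin m} {k j : ℕ} (h1 : j + 1 ≤ k) (h2 : k ≤ n - 1) :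
    Q.e ((a : ℕ) + 1) k ∈ TT Q j :=
  Submodule.subset_span (Or.inl ⟨a, k, h1, h2, rfl⟩)

lemma lie_e_mem_TT (j : ℕ) (a : Fin m) (k : ℕ) (h1 : j + 1 ≤ k) (h2 : k ≤ n - 1) (hj : 1 ≤ k)
    (x : N) : ⁅x, Q.e ((a : ℕ) + 1) k⁆ ∈ TT Q (j + 1) := by
  refine topInd Q (fun y => ⁅y, Q.e ((a : ℕ) + 1) k⁆ ∈ TT Q (j + 1)) ?_ ?_ ?_ ?_ x
  · simp only [zero_lie]; exact zero_mem _
  · intro p q hp hq; rw [add_lie]; exact add_mem hp hq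
  · intro c p hp; rw [smul_lie]; exact Submodule.smul_mem _ c hp
  intro idx
  rcases idx with ⟨t, u⟩ | t
  · show ⁅Q.e ((t : ℕ) + 1) (u : ℕ), Q.e ((a : ℕ) + 1) k⁆ ∈ TT Q (j + 1)
    by_cases ht : (t : ℕ) = (a : ℕ)
    · rw [ht]
      rcases Nat.eq_zero_or_pos (u : ℕ) with hu | hu
      · rw [hu]
        rcases Nat.lt_or_ge k (n - 1) with hk | hk
        · rw [Q.bracket_e0 _ _ (by omega) (by omega) (by omega) (by omega)]
          exact e_mem_TT Q (by omega) (by omega)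
        · rw [show k = n - 1 by omega, Q.bracket_e0_top _ (by omega) (by omega)]
          exact zero_mem _
      · by_cases hsum : (u : ℕ) + k = n
        · rw [show k = n - (u : ℕ) by omega,
            Q.bracket_pair _ _ (by omega) (by omega) (by omega) (by omega)]
          exact Submodule.smul_mem _ _ (SS_le_TT Q _ (e_n_mem_SS Q hn5 hrm a))
        · rw [Q.bracket_zero _ _ _ (by omega) (by omega) (by omega) (by omega) (by omega)
            (by omega) (by omega)]
          exact zero_mem _
    · rw [Q.bracket_comm _ _ _ _ (by omega) (by omega) (by omega) (by omega) (by omega)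
        (by omega) (by omega)]
      exact zero_mem _
  · show ⁅Q.e ((t : ℕ) + 1) n, Q.e ((a : ℕ) + 1) k⁆ ∈ TT Q (j + 1)
    by_cases ht : (t : ℕ) = (a : ℕ)
    · rw [ht, Q.bracket_zero _ _ _ (by omega) (by omega) (by omega) (by omega) (by omega)
        (by omega) (by omega)]
      exact zero_mem _
    · rw [Q.bracket_comm _ _ _ _ (by omega) (by omega) (by omega) (by omega) (by omega)
        (by omega) (by omega)]
      exact zero_mem _

lemma lie_e0_mem_TT (t : Fin m) (x : N) : ⁅x, Q.e ((t : ℕ) + 1) 0⁆ ∈ TT Q 1 := by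
  refine topInd Q (fun y => ⁅y, Q.e ((t : ℕ) + 1) 0⁆ ∈ TT Q 1) ?_ ?_ ?_ ?_ x
  · simp only [zero_lie]; exact zero_mem _
  · intro p q hp hq; rw [add_lie]; exact add_mem hp hq
  · intro c p hp; rw [smul_lie]; exact Submodule.smul_mem _ c hp
  intro idx
  have hskew : ∀ z w : N, ⁅z, w⁆ = -⁅w, z⁆ := fun z w => by rw [← lie_skew]
  rcases idx with ⟨t', u'⟩ | t'
  · show ⁅Q.e ((t' : ℕ) + 1) (u' : ℕ), Q.e ((t : ℕ) + 1) 0⁆ ∈ TT Q 1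
    by_cases ht : (t' : ℕ) = (t : ℕ)
    · rw [ht]
      rcases Nat.eq_zero_or_pos (u' : ℕ) with hu | hu
      · rw [hu, lie_self]; exact zero_mem _
      · rw [hskew]
        rcases Nat.lt_or_ge (u' : ℕ) (n - 1) with hk | hk
        · rw [Q.bracket_e0 _ _ (by omega) (by omega) (by omega) (by omega)]
          exact neg_mem (e_mem_TT Q (by omega) (by omega))
        · rw [show ((u' : ℕ)) = n - 1 by omega, Q.bracket_e0_top _ (by omega) (by omega),
            neg_zero]
          exact zero_mem _
    · rw [Q.bracket_comm _ _ _ _ (by omega) (by omega) (by omega) (by omega) (by omega)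
        (by omega) (by omega)]
      exact zero_mem _
  · show ⁅Q.e ((t' : ℕ) + 1) n, Q.e ((t : ℕ) + 1) 0⁆ ∈ TT Q 1
    rw [hskew]
    by_cases ht : (t' : ℕ) = (t : ℕ)
    · rw [← ht, Q.bracket_e0_n _ (by omega) (by omega), neg_zero]
      exact zero_mem _
    · rw [Q.bracket_comm _ _ _ _ (by omega) (by omega) (by omega) (by omega) (by omega)
        (by omega) (by omega), neg_zero]
      exact zero_mem _

lemma lcs_le_TT : ∀ j, 1 ≤ j → j ≤ n - 1 → lcsS N j ≤ TT Q j := by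
  intro j
  induction j with
  | zero => intro h; omega
  | succ j ih =>
    intro _ h2
    rcases Nat.eq_zero_or_pos j with hj | hj
    · subst hj
      refine lcsS_succ_le _ ?_
      intro y x _
      refine topInd Q (fun z => ⁅y, z⁆ ∈ TT Q 1) ?_ ?_ ?_ ?_ x
      · simp only [lie_zero]; exact zero_mem _
      · intro p q hp hq; rw [lie_add]; exact add_mem hp hq
      · intro c p hp; rw [lie_smul]; exact Submodule.smul_mem _ c hp
      intro idx
      rcases idx with ⟨t, u⟩ | t
      · show ⁅y, Q.e ((t : ℕ) + 1) (u : ℕ)⁆ ∈ TT Q 1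
        rcases Nat.eq_zero_or_pos (u : ℕ) with hu | hu
        · rw [hu]; exact lie_e0_mem_TT Q hn5 hrm t y
        · exact lie_e_mem_TT Q hn5 hrm 0 t (u : ℕ) (by omega) (by omega) (by omega) y
      · show ⁅y, Q.e ((t : ℕ) + 1) n⁆ ∈ TT Q 1
        rw [central Q hn5 hrm ⟨(t : ℕ), by omega⟩ y]
        exact zero_mem _
    · refine lcsS_succ_le _ ?_
      intro y x hx
      have hx' : x ∈ TT Q j := ih (by omega) (by omega) hx
      refine spanInd (fun z => ⁅y, z⁆ ∈ TT Q (j + 1)) ?_ ?_ ?_ ?_ x hx'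
      · simp only [lie_zero]; exact zero_mem _
      · intro p q hp hq; rw [lie_add]; exact add_mem hp hq
      · intro c p hp; rw [lie_smul]; exact Submodule.smul_mem _ c hp
      rintro z (⟨a, k, hk1, hk2, rfl⟩ | ⟨t, rfl⟩)
      · exact lie_e_mem_TT Q hn5 hrm j a k hk1 hk2 (by omega) y
      · rw [central Q hn5 hrm ⟨(t : ℕ), by omega⟩ y]
        exact zero_mem _

lemma Hspan_W (x : N) (hx : x ∈ WW Q) (a : Fin m) (k : ℕ) (h1 : 1 ≤ k) (h2 : k ≤ n - 2) :
    ⁅x, Q.e ((a : ℕ) + 1) k⁆ = 0 := by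
  refine spanInd (fun z => ⁅z, Q.e ((a : ℕ) + 1) k⁆ = (0 : N)) ?_ ?_ ?_ ?_ x hx
  · exact zero_lie _
  · intro p q hp hq; rw [add_lie, hp, hq, add_zero]
  · intro c p hp; rw [smul_lie, hp, smul_zero]
  rintro z ⟨t, rfl⟩
  show ⁅Q.e ((t : ℕ) + 1) 1, Q.e ((a : ℕ) + 1) k⁆ = 0
  by_cases ht : (t : ℕ) = (a : ℕ)
  · rw [ht]
    exact Q.bracket_zero _ _ _ (by omega) (by omega) (by omega) (by omega) (by omega) (by omega)
      (by omega)
  · exact Q.bracket_comm _ _ _ _ (by omega) (by omega) (by omega) (by omega) (by omega)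
      (by omega) (by omega)

lemma Hspan_C (x : N) (hx : x ∈ lcsS N 1) (a : Fin m) (k : ℕ) (h1 : 1 ≤ k) (h2 : k ≤ n - 2) :
    ⁅x, Q.e ((a : ℕ) + 1) k⁆ ∈ SS Q := by
  have hx' : x ∈ TT Q 1 := lcs_le_TT Q hn5 hrm 1 le_rfl (by omega) hx
  refine spanInd (fun z => ⁅z, Q.e ((a : ℕ) + 1) k⁆ ∈ SS Q) ?_ ?_ ?_ ?_ x hx'
  · simp only [zero_lie]; exact zero_mem _
  · intro p q hp hq; rw [add_lie]; exact add_mem hp hq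
  · intro c p hp; rw [smul_lie]; exact Submodule.smul_mem _ c hp
  rintro z (⟨a', v, hv1, hv2, rfl⟩ | ⟨t, rfl⟩)
  · show ⁅Q.e ((a' : ℕ) + 1) v, Q.e ((a : ℕ) + 1) k⁆ ∈ SS Q
    by_cases ht : (a' : ℕ) = (a : ℕ)
    · rw [ht]
      by_cases hsum : v + k = n
      · rw [show k = n - v by omega, Q.bracket_pair _ _ (by omega) (by omega) (by omega)
          (by omega)]
        exact Submodule.smul_mem _ _ (e_n_mem_SS Q hn5 hrm a)
      · rw [Q.bracket_zero _ _ _ (by omega) (by omega) (by omega) (by omega) (by omega)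
          (by omega) (by omega)]
        exact zero_mem _
    · rw [Q.bracket_comm _ _ _ _ (by omega) (by omega) (by omega) (by omega) (by omega)
        (by omega) (by omega)]
      exact zero_mem _
  · show ⁅Q.e ((t : ℕ) + 1) n, Q.e ((a : ℕ) + 1) k⁆ ∈ SS Q
    by_cases ht : (t : ℕ) = (a : ℕ)
    · rw [ht, Q.bracket_zero _ _ _ (by omega) (by omega) (by omega) (by omega) (by omega)
        (by omega) (by omega)]
      exact zero_mem _
    · rw [Q.bracket_comm _ _ _ _ (by omega) (by omega) (by omega) (by omega) (by omega)
        (by omega) (by omega)]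
      exact zero_mem _

lemma Hspan_C' (x : N) (hx : x ∈ lcsS N 1) (a : Fin m) :
    ⁅x, Q.e ((a : ℕ) + 1) (n - 1)⁆ = 0 := by
  have hx' : x ∈ TT Q 1 := lcs_le_TT Q hn5 hrm 1 le_rfl (by omega) hx
  refine spanInd (fun z => ⁅z, Q.e ((a : ℕ) + 1) (n - 1)⁆ = (0 : N)) ?_ ?_ ?_ ?_ x hx'
  · exact zero_lie _
  · intro p q hp hq; rw [add_lie, hp, hq, add_zero]
  · intro c p hp; rw [smul_lie, hp, smul_zero]
  rintro z (⟨a', v, hv1, hv2, rfl⟩ | ⟨t, rfl⟩)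
  · show ⁅Q.e ((a' : ℕ) + 1) v, Q.e ((a : ℕ) + 1) (n - 1)⁆ = 0
    by_cases ht : (a' : ℕ) = (a : ℕ)
    · rw [ht]
      exact Q.bracket_zero _ _ _ (by omega) (by omega) (by omega) (by omega) (by omega)
        (by omega) (by omega)
    · exact Q.bracket_comm _ _ _ _ (by omega) (by omega) (by omega) (by omega) (by omega)
        (by omega) (by omega)
  · show ⁅Q.e ((t : ℕ) + 1) n, Q.e ((a : ℕ) + 1) (n - 1)⁆ = 0
    by_cases ht : (t : ℕ) = (a : ℕ)
    · rw [ht]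
      exact Q.bracket_zero _ _ _ (by omega) (by omega) (by omega) (by omega) (by omega)
        (by omega) (by omega)
    · exact Q.bracket_comm _ _ _ _ (by omega) (by omega) (by omega) (by omega) (by omega)
        (by omega) (by omega)

end Tlemmas

lemma D_lcs (D : LieDerivation ℂ N N) : ∀ k, ∀ x ∈ lcsS N k, D x ∈ lcsS N k := by
  intro k
  induction k with
  | zero => intro x _; rw [mem_lcsS_iff]; trivial
  | succ k ih =>
    intro x hx
    have hle : lcsS N (k + 1) ≤ Submodule.comap (D : N →ₗ[ℂ] N) (lcsS N (k + 1)) := by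
      refine lcsS_succ_le _ ?_
      intro y z hz
      simp only [Submodule.mem_comap, LieDerivation.coeFn_coe]
      rw [D.apply_lie_eq_add]
      exact add_mem (lie_lcs y (ih z hz)) (lie_lcs (D y) hz)
    have := hle hx
    simpa using this

section DiagHigher
include Q hn5 hrm

lemma Dc (D : LieDerivation ℂ N N) (a : Fin m) :
    ∀ k, 2 ≤ k → k ≤ n - 1 →
      ∃ lam : ℂ, D (Q.e ((a : ℕ) + 1) k) - lam • Q.e ((a : ℕ) + 1) k ∈ lcsS N k := by
  have hDa := Da Q hn5 hrm D a
  set α := (bas Q).repr (D (Q.e ((a : ℕ) + 1) 0)) (.inl (a, (⟨0, by omega⟩ : Fin n))) with hα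
  rw [Submodule.mem_sup] at hDa
  obtain ⟨w, hw, c, hc, hwc⟩ := hDa
  have h0 : D (Q.e ((a : ℕ) + 1) 0) = α • Q.e ((a : ℕ) + 1) 0 + (w + c) := by
    rw [hwc]; abel
  have hDb := Db Q hn5 hrm D a
  set f := (bas Q).repr (D (Q.e ((a : ℕ) + 1) 1)) (.inl (a, (⟨1, by omega⟩ : Fin n))) with hf
  set gB := D (Q.e ((a : ℕ) + 1) 1) - f • Q.e ((a : ℕ) + 1) 1 with hgB
  have h1 : D (Q.e ((a : ℕ) + 1) 1) = f • Q.e ((a : ℕ) + 1) 1 + gB := by rw [hgB]; abel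
  intro k
  induction k with
  | zero => intro h; omega
  | succ k ih =>
    intro hk2 hkn
    rcases Nat.lt_or_ge k 2 with hk | hk
    · -- k = 1, so k + 1 = 2 : base case
      have hk1 : k = 1 := by omega
      subst hk1
      have hbr : ⁅Q.e ((a : ℕ) + 1) 0, Q.e ((a : ℕ) + 1) 1⁆ = Q.e ((a : ℕ) + 1) 2 := by
        have := Q.bracket_e0 ((a : ℕ) + 1) 1 (by omega) (by omega) (by omega) (by omega)
        simpa using this
      refine ⟨f + α, ?_⟩
      have hApp := D.apply_lie_eq_add (Q.e ((a : ℕ) + 1) 0) (Q.e ((a : ℕ) + 1) 1)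
      rw [hbr, h0, h1] at hApp
      have heq : D (Q.e ((a : ℕ) + 1) 2) - (f + α) • Q.e ((a : ℕ) + 1) 2 =
          ⁅Q.e ((a : ℕ) + 1) 0, gB⁆ + (⁅w, Q.e ((a : ℕ) + 1) 1⁆ + ⁅c, Q.e ((a : ℕ) + 1) 1⁆) := by
        rw [hApp]
        simp only [lie_add, add_lie, lie_smul, smul_lie, hbr]
        module
      rw [heq]
      refine add_mem (lie_lcs _ hDb) (add_mem ?_ ?_)
      · rw [Hspan_W Q hn5 hrm w hw a 1 (by omega) (by omega)]
        exact zero_mem _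
      · have := Hspan_C Q hn5 hrm c hc a 1 (by omega) (by omega)
        rw [SS_eq_lcs Q hn5 hrm] at this
        exact lcsS_antitone (by omega) this
    · obtain ⟨lam, hlam⟩ := ih (by omega) (by omega)
      set gk := D (Q.e ((a : ℕ) + 1) k) - lam • Q.e ((a : ℕ) + 1) k with hgk
      have hk' : D (Q.e ((a : ℕ) + 1) k) = lam • Q.e ((a : ℕ) + 1) k + gk := by rw [hgk]; abel
      have hbr : ⁅Q.e ((a : ℕ) + 1) 0, Q.e ((a : ℕ) + 1) k⁆ = Q.e ((a : ℕ) + 1) (k + 1) :=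
        Q.bracket_e0 _ _ (by omega) (by omega) (by omega) (by omega)
      refine ⟨lam + α, ?_⟩
      have hApp := D.apply_lie_eq_add (Q.e ((a : ℕ) + 1) 0) (Q.e ((a : ℕ) + 1) k)
      rw [hbr, h0, hk'] at hApp
      have heq : D (Q.e ((a : ℕ) + 1) (k + 1)) - (lam + α) • Q.e ((a : ℕ) + 1) (k + 1) =
          ⁅Q.e ((a : ℕ) + 1) 0, gk⁆ +
            (⁅w, Q.e ((a : ℕ) + 1) k⁆ + ⁅c, Q.e ((a : ℕ) + 1) k⁆) := by
        rw [hApp]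
        simp only [lie_add, add_lie, lie_smul, smul_lie, hbr]
        module
      rw [heq]
      refine add_mem (lie_lcs _ hlam) (add_mem ?_ ?_)
      · rw [Hspan_W Q hn5 hrm w hw a k (by omega) (by omega)]
        exact zero_mem _
      · have := Hspan_C Q hn5 hrm c hc a k (by omega) (by omega)
        rw [SS_eq_lcs Q hn5 hrm] at this
        exact lcsS_antitone (by omega) this

lemma Dn (D : LieDerivation ℂ N N) (a : Fin m) :
    ∃ lam : ℂ, D (Q.e ((a : ℕ) + 1) n) = lam • Q.e ((a : ℕ) + 1) n := by
  have hDb := Db Q hn5 hrm D a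
  set f := (bas Q).repr (D (Q.e ((a : ℕ) + 1) 1)) (.inl (a, (⟨1, by omega⟩ : Fin n))) with hf
  set gB := D (Q.e ((a : ℕ) + 1) 1) - f • Q.e ((a : ℕ) + 1) 1 with hgB
  have h1 : D (Q.e ((a : ℕ) + 1) 1) = f • Q.e ((a : ℕ) + 1) 1 + gB := by rw [hgB]; abel
  obtain ⟨lam, hlam⟩ := Dc Q hn5 hrm D a (n - 1) (by omega) le_rfl
  set g := D (Q.e ((a : ℕ) + 1) (n - 1)) - lam • Q.e ((a : ℕ) + 1) (n - 1) with hg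
  have h2 : D (Q.e ((a : ℕ) + 1) (n - 1)) = lam • Q.e ((a : ℕ) + 1) (n - 1) + g := by
    rw [hg]; abel
  have hgS : g ∈ SS Q := by rw [SS_eq_lcs Q hn5 hrm]; exact hlam
  have hpair := pair1 Q hn5 a a.isLt
  have hpair' : Q.e ((a : ℕ) + 1) n = -⁅Q.e ((a : ℕ) + 1) 1, Q.e ((a : ℕ) + 1) (n - 1)⁆ := by
    rw [hpair, neg_neg]
  refine ⟨lam + f, ?_⟩
  have hApp := D.apply_lie_eq_add (Q.e ((a : ℕ) + 1) 1) (Q.e ((a : ℕ) + 1) (n - 1))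
  rw [hpair] at hApp
  -- hApp : D (-e n) = ⁅e1, D e_{n-1}⁆ + ⁅D e1, e_{n-1}⁆
  rw [map_neg, h1, h2] at hApp
  have hgz : ⁅Q.e ((a : ℕ) + 1) 1, g⁆ = 0 := central_SS Q hn5 hrm g hgS _
  have hgBz : ⁅gB, Q.e ((a : ℕ) + 1) (n - 1)⁆ = 0 := Hspan_C' Q hn5 hrm gB hDb a
  rw [lie_add, lie_smul, add_lie, smul_lie, hpair, hgz, hgBz] at hApp
  -- hApp : -(D e n) = lam • -e n + 0 + (f • -e n + 0)
  have : D (Q.e ((a : ℕ) + 1) n) = -(lam • -Q.e ((a : ℕ) + 1) n + 0 + (f • -Q.e ((a : ℕ) + 1) n + 0)) := by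
    rw [← hApp, neg_neg]
  rw [this]
  module

end DiagHigher


section Comm
include Q hn5 hrm

lemma DWC (D : LieDerivation ℂ N N) (x : N) (hx : x ∈ WW Q ⊔ lcsS N 1) :
    D x ∈ WW Q ⊔ lcsS N 1 := by
  rw [Submodule.mem_sup] at hx
  obtain ⟨w, hw, c, hc, rfl⟩ := hx
  rw [map_add]
  refine add_mem ?_ (Submodule.mem_sup_right (D_lcs D 1 c hc))
  refine spanInd (fun z => D z ∈ WW Q ⊔ lcsS N 1) ?_ ?_ ?_ ?_ w hw
  · simp only [map_zero]; exact zero_mem _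
  · intro p q hp hq; rw [map_add]; exact add_mem hp hq
  · intro k p hp; rw [map_smul]; exact Submodule.smul_mem _ k hp
  · rintro z ⟨t, rfl⟩
    show D (Q.e ((t : ℕ) + 1) 1) ∈ WW Q ⊔ lcsS N 1
    have h := Db Q hn5 hrm D t
    rw [← sub_add_cancel (D (Q.e ((t : ℕ) + 1) 1))
      (((bas Q).repr (D (Q.e ((t : ℕ) + 1) 1)) (.inl (t, (⟨1, by omega⟩ : Fin n)))) •
        Q.e ((t : ℕ) + 1) 1)]
    exact add_mem (Submodule.mem_sup_right h)
      (Submodule.mem_sup_left (Submodule.smul_mem _ _ (Submodule.subset_span ⟨t, rfl⟩)))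

lemma M1 (D E : LieDerivation ℂ N N) (a : Fin m) :
    ⁅D, E⁆ (Q.e ((a : ℕ) + 1) 0) ∈ WW Q ⊔ lcsS N 1 := by
  set v := Q.e ((a : ℕ) + 1) 0 with hv
  set αD := (bas Q).repr (D v) (.inl (a, (⟨0, by omega⟩ : Fin n))) with hαD
  set αE := (bas Q).repr (E v) (.inl (a, (⟨0, by omega⟩ : Fin n))) with hαE
  set gD := D v - αD • v with hgD
  set gE := E v - αE • v with hgE
  have hgDm : gD ∈ WW Q ⊔ lcsS N 1 := Da Q hn5 hrm D a
  have hgEm : gE ∈ WW Q ⊔ lcsS N 1 := Da Q hn5 hrm E a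
  have hD0 : D v = αD • v + gD := by rw [hgD]; abel
  have hE0 : E v = αE • v + gE := by rw [hgE]; abel
  have h : ⁅D, E⁆ v = αE • gD + D gE - (αD • gE + E gD) := by
    rw [LieDerivation.lie_apply, hE0, hD0, map_add, map_add, map_smul, map_smul, hD0, hE0]
    module
  rw [h]
  refine sub_mem (add_mem (Submodule.smul_mem _ _ hgDm) (DWC Q hn5 hrm D gE hgEm))
    (add_mem (Submodule.smul_mem _ _ hgEm) (DWC Q hn5 hrm E gD hgDm))

lemma M2 (D E : LieDerivation ℂ N N) (a : Fin m) :
    ⁅D, E⁆ (Q.e ((a : ℕ) + 1) 1) ∈ lcsS N 1 := by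
  set v := Q.e ((a : ℕ) + 1) 1 with hv
  set fD := (bas Q).repr (D v) (.inl (a, (⟨1, by omega⟩ : Fin n))) with hfD
  set fE := (bas Q).repr (E v) (.inl (a, (⟨1, by omega⟩ : Fin n))) with hfE
  set gD := D v - fD • v with hgD
  set gE := E v - fE • v with hgE
  have hgDm : gD ∈ lcsS N 1 := Db Q hn5 hrm D a
  have hgEm : gE ∈ lcsS N 1 := Db Q hn5 hrm E a
  have hD0 : D v = fD • v + gD := by rw [hgD]; abel
  have hE0 : E v = fE • v + gE := by rw [hgE]; abel
  have h : ⁅D, E⁆ v = fE • gD + D gE - (fD • gE + E gD) := by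
    rw [LieDerivation.lie_apply, hE0, hD0, map_add, map_add, map_smul, map_smul, hD0, hE0]
    module
  rw [h]
  exact sub_mem (add_mem (Submodule.smul_mem _ _ hgDm) (D_lcs D 1 gE hgEm))
    (add_mem (Submodule.smul_mem _ _ hgEm) (D_lcs E 1 gD hgDm))

lemma Mc (D E : LieDerivation ℂ N N) (a : Fin m) (k : ℕ) (h2 : 2 ≤ k) (hk : k ≤ n - 1) :
    ⁅D, E⁆ (Q.e ((a : ℕ) + 1) k) ∈ lcsS N k := by
  set v := Q.e ((a : ℕ) + 1) k with hv
  obtain ⟨lamD, hlamD⟩ := Dc Q hn5 hrm D a k h2 hk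
  obtain ⟨lamE, hlamE⟩ := Dc Q hn5 hrm E a k h2 hk
  set gD := D v - lamD • v with hgD
  set gE := E v - lamE • v with hgE
  have hD0 : D v = lamD • v + gD := by rw [hgD]; abel
  have hE0 : E v = lamE • v + gE := by rw [hgE]; abel
  have h : ⁅D, E⁆ v = lamE • gD + D gE - (lamD • gE + E gD) := by
    rw [LieDerivation.lie_apply, hE0, hD0, map_add, map_add, map_smul, map_smul, hD0, hE0]
    module
  rw [h]
  exact sub_mem (add_mem (Submodule.smul_mem _ _ hlamD) (D_lcs D k gE hlamE))
    (add_mem (Submodule.smul_mem _ _ hlamE) (D_lcs E k gD hlamD))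

lemma Mn (D E : LieDerivation ℂ N N) (a : Fin m) :
    ⁅D, E⁆ (Q.e ((a : ℕ) + 1) n) = 0 := by
  obtain ⟨lamD, hD⟩ := Dn Q hn5 hrm D a
  obtain ⟨lamE, hE⟩ := Dn Q hn5 hrm E a
  rw [LieDerivation.lie_apply, hE, hD, map_smul, map_smul, hD, hE]
  module

lemma Mz (D E : LieDerivation ℂ N N) (x : N) (hx : x ∈ SS Q) : ⁅D, E⁆ x = 0 := by
  refine spanInd (fun z => ⁅D, E⁆ z = (0 : N)) ?_ ?_ ?_ ?_ x hx
  · simp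
  · intro p q hp hq; rw [map_add, hp, hq, add_zero]
  · intro c p hp; rw [map_smul, hp, smul_zero]
  · rintro z ⟨t, rfl⟩
    show ⁅D, E⁆ (Q.e ((t : ℕ) + 1) n) = 0
    have := Mn Q hn5 hrm D E ⟨(t : ℕ), by omega⟩
    simpa using this

lemma M3 (D E : LieDerivation ℂ N N) : ∀ j, 1 ≤ j → ∀ x ∈ lcsS N j,
    ⁅D, E⁆ x ∈ lcsS N (j + 1) := by
  intro j hj x hx
  rcases le_or_gt j (n - 2) with h | h
  · have hx' : x ∈ TT Q j := lcs_le_TT Q hn5 hrm j hj (by omega) hx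
    refine spanInd (fun z => ⁅D, E⁆ z ∈ lcsS N (j + 1)) ?_ ?_ ?_ ?_ x hx'
    · simp only [map_zero]; exact zero_mem _
    · intro p q hp hq; rw [map_add]; exact add_mem hp hq
    · intro c p hp; rw [map_smul]; exact Submodule.smul_mem _ c hp
    · rintro z (⟨a, k, hk1, hk2, rfl⟩ | ⟨t, rfl⟩)
      · exact lcsS_antitone hk1 (Mc Q hn5 hrm D E a k (by omega) hk2)
      · show ⁅D, E⁆ (Q.e ((t : ℕ) + 1) n) ∈ lcsS N (j + 1)
        rw [Mz Q hn5 hrm D E _ (Submodule.subset_span ⟨t, rfl⟩)]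
        exact zero_mem _
  · have hxS : x ∈ SS Q := by
      rw [SS_eq_lcs Q hn5 hrm]
      exact lcsS_antitone (by omega) hx
    rw [Mz Q hn5 hrm D E x hxS]
    exact zero_mem _

end Comm

/-- the invariant flag used to bound the derived series -/
def Flag (Q : QuasiQnFiliform n m r N) : ℕ → Submodule ℂ N
  | 0 => ⊤
  | 1 => WW Q ⊔ lcsS N 1
  | (j+2) => lcsS N (j + 1)

section FlagSec
include Q

lemma Flag_succ_le : ∀ b, Flag Q (b + 1) ≤ Flag Q b
  | 0 => le_top
  | 1 => le_sup_right
  | (j+2) => lcsS_antitone (by omega)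

lemma Flag_le {b b' : ℕ} (h : b ≤ b') : Flag Q b' ≤ Flag Q b := by
  induction b' with
  | zero => rw [Nat.le_zero.mp h]
  | succ b' ih =>
    rcases Nat.lt_or_ge b (b' + 1) with h' | h'
    · exact le_trans (Flag_succ_le Q b') (ih (by omega))
    · rw [show b = b' + 1 by omega]

include hn5 hrm

lemma Flag_bot : Flag Q (n + 1) = ⊥ := by
  rw [show n + 1 = (n - 1) + 2 by omega]
  show lcsS N (n - 1 + 1) = ⊥
  rw [show n - 1 + 1 = n by omega]
  exact lcs_n_bot Q hn5 hrm

lemma Kmain (D E : LieDerivation ℂ N N) : ∀ b, ∀ x ∈ Flag Q b,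
    ⁅D, E⁆ x ∈ Flag Q (b + 1) := by
  intro b
  match b with
  | 0 =>
    intro x _
    show ⁅D, E⁆ x ∈ WW Q ⊔ lcsS N 1
    refine topInd Q (fun z => ⁅D, E⁆ z ∈ WW Q ⊔ lcsS N 1) ?_ ?_ ?_ ?_ x
    · simp only [map_zero]; exact zero_mem _
    · intro p q hp hq; rw [map_add]; exact add_mem hp hq
    · intro c p hp; rw [map_smul]; exact Submodule.smul_mem _ c hp
    · intro idx
      rcases idx with ⟨t, u⟩ | t
      · show ⁅D, E⁆ (Q.e ((t : ℕ) + 1) (u : ℕ)) ∈ WW Q ⊔ lcsS N 1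
        rcases Nat.lt_or_ge (u : ℕ) 1 with hu | hu
        · rw [show ((u : ℕ)) = 0 by omega]
          exact M1 Q hn5 hrm D E t
        · rcases Nat.lt_or_ge (u : ℕ) 2 with hu2 | hu2
          · rw [show ((u : ℕ)) = 1 by omega]
            exact Submodule.mem_sup_right (M2 Q hn5 hrm D E t)
          · exact Submodule.mem_sup_right (lcsS_antitone (by omega)
              (Mc Q hn5 hrm D E t (u : ℕ) (by omega) (by omega)))
      · show ⁅D, E⁆ (Q.e ((t : ℕ) + 1) n) ∈ WW Q ⊔ lcsS N 1
        rw [Mz Q hn5 hrm D E _ (Submodule.subset_span ⟨t, rfl⟩)]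
        exact zero_mem _
  | 1 =>
    intro x hx
    show ⁅D, E⁆ x ∈ lcsS N 1
    replace hx : x ∈ WW Q ⊔ lcsS N 1 := hx
    rw [Submodule.mem_sup] at hx
    obtain ⟨w, hw, c, hc, rfl⟩ := hx
    rw [map_add]
    refine add_mem ?_ (lcsS_antitone (by omega) (M3 Q hn5 hrm D E 1 le_rfl c hc))
    refine spanInd (fun z => ⁅D, E⁆ z ∈ lcsS N 1) ?_ ?_ ?_ ?_ w hw
    · simp only [map_zero]; exact zero_mem _
    · intro p q hp hq; rw [map_add]; exact add_mem hp hq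
    · intro k p hp; rw [map_smul]; exact Submodule.smul_mem _ k hp
    · rintro z ⟨t, rfl⟩
      exact M2 Q hn5 hrm D E t
  | (j+2) =>
    intro x hx
    show ⁅D, E⁆ x ∈ lcsS N (j + 2)
    have := M3 Q hn5 hrm D E (j + 1) (by omega) x hx
    rwa [show j + 1 + 1 = j + 2 by omega] at this

end FlagSec

/-- the filtration of the derivation algebra -/
def KK (Q : QuasiQnFiliform n m r N) (s : ℕ) : Submodule ℂ (LieDerivation ℂ N N) where
  carrier := {D | ∀ b, ∀ x ∈ Flag Q b, D x ∈ Flag Q (b + s)}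
  add_mem' := by
    intro D E hD hE b x hx
    rw [LieDerivation.add_apply]
    exact add_mem (hD b x hx) (hE b x hx)
  zero_mem' := by
    intro b x hx
    show (0 : LieDerivation ℂ N N) x ∈ _
    rw [show (0 : LieDerivation ℂ N N) x = 0 from rfl]
    exact zero_mem _
  smul_mem' := by
    intro c D hD b x hx
    rw [LieDerivation.smul_apply]
    exact Submodule.smul_mem _ c (hD b x hx)

lemma mem_KK {s : ℕ} {D : LieDerivation ℂ N N} :
    D ∈ KK Q s ↔ ∀ b, ∀ x ∈ Flag Q b, D x ∈ Flag Q (b + s) := Iff.rfl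

lemma K_mono {s s' : ℕ} (h : s' ≤ s) : KK Q s ≤ KK Q s' := by
  intro D hD b x hx
  exact Flag_le Q (by omega) (hD b x hx)

lemma K_bracket {s t : ℕ} {D E : LieDerivation ℂ N N} (hD : D ∈ KK Q s) (hE : E ∈ KK Q t) :
    ⁅D, E⁆ ∈ KK Q (s + t) := by
  rw [mem_KK]
  intro b x hx
  rw [LieDerivation.lie_apply]
  have h1 : D (E x) ∈ Flag Q (b + t + s) := hD (b + t) _ (hE b x hx)
  have h2 : E (D x) ∈ Flag Q (b + s + t) := hE (b + s) _ (hD b x hx)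
  rw [show b + t + s = b + (s + t) by omega] at h1
  rw [show b + s + t = b + (s + t) by omega] at h2
  exact sub_mem h1 h2

section Final
include Q hn5 hrm

lemma K_one (D E : LieDerivation ℂ N N) : ⁅D, E⁆ ∈ KK Q 1 := by
  rw [mem_KK]
  intro b x hx
  exact Kmain Q hn5 hrm D E b x hx

lemma K_bot {D : LieDerivation ℂ N N} (hD : D ∈ KK Q (n + 1)) : D = 0 := by
  ext x
  have := hD 0 x trivial
  rw [show 0 + (n + 1) = n + 1 by omega, Flag_bot Q hn5 hrm, Submodule.mem_bot] at this
  simpa using this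

lemma ds_le : ∀ s : ℕ,
    LieSubmodule.toSubmodule (LieAlgebra.derivedSeries ℂ (LieDerivation ℂ N N) (s + 1)) ≤
      KK Q (2 ^ s)
  | 0 => by
    have hds : LieAlgebra.derivedSeries ℂ (LieDerivation ℂ N N) 1 =
        ⁅(⊤ : LieIdeal ℂ (LieDerivation ℂ N N)), (⊤ : LieIdeal ℂ (LieDerivation ℂ N N))⁆ := by
      rw [LieAlgebra.derivedSeries_def, LieAlgebra.derivedSeriesOfIdeal_succ,
        LieAlgebra.derivedSeriesOfIdeal_zero]
    rw [hds, LieSubmodule.lieIdeal_oper_eq_linear_span', Submodule.span_le]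
    rintro z ⟨D, -, E, -, rfl⟩
    rw [pow_zero]
    exact K_one Q hn5 hrm D E
  | (s+1) => by
    have hds : LieAlgebra.derivedSeries ℂ (LieDerivation ℂ N N) (s + 2) =
        ⁅LieAlgebra.derivedSeries ℂ (LieDerivation ℂ N N) (s + 1),
          LieAlgebra.derivedSeries ℂ (LieDerivation ℂ N N) (s + 1)⁆ := by
      rw [LieAlgebra.derivedSeries_def, LieAlgebra.derivedSeriesOfIdeal_succ,
        ← LieAlgebra.derivedSeries_def]
    rw [hds, LieSubmodule.lieIdeal_oper_eq_linear_span', Submodule.span_le]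
    rintro z ⟨D, hD, E, hE, rfl⟩
    have h1 : D ∈ KK Q (2 ^ s) := ds_le s ((LieSubmodule.mem_toSubmodule _).mpr hD)
    have h2 : E ∈ KK Q (2 ^ s) := ds_le s ((LieSubmodule.mem_toSubmodule _).mpr hE)
    have h3 := K_bracket Q h1 h2
    rwa [show 2 ^ s + 2 ^ s = 2 ^ (s + 1) by rw [pow_succ]; omega] at h3

lemma main_solvable : LieAlgebra.IsSolvable (LieDerivation ℂ N N) := by
  rw [LieAlgebra.isSolvable_iff ℂ]
  refine ⟨n + 2, ?_⟩
  rw [eq_bot_iff]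
  intro D hD
  have h1 : D ∈ KK Q (2 ^ (n + 1)) :=
    ds_le Q hn5 hrm (n + 1) ((LieSubmodule.mem_toSubmodule _).mpr hD)
  have h2 : D ∈ KK Q (n + 1) := K_mono Q (le_of_lt (Nat.lt_two_pow_self (n := n + 1))) h1
  have h3 := K_bot Q hn5 hrm h2
  rw [h3]
  exact LieSubmodule.zero_mem _

end Final

end QQFProof

/-- The derivation algebra of a quasi `Qₙ`-filiform Lie algebra `N = N(Qₙ, m, r)` is
solvable. -/
theorem derivation_algebra_isSolvable
    (n d m r : ℕ) (hn : n = 2 * d + 1) (hd : 2 ≤ d)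
    (hm : 1 ≤ m) (hr : 1 ≤ r) (hrm : r ≤ m)
    (N : Type*) [LieRing N] [LieAlgebra ℂ N] (Q : QuasiQnFiliform n m r N) :
    LieAlgebra.IsSolvable (LieDerivation ℂ N N) := by
  exact QQFProof.main_solvable Q (by omega) hrm
end
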